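/- Let 0 < α < 1, let X' be a finite linearly independent set of unit vectors in R^d that is equiangular with angle α, let W be the linear span of X', and fix b₀ ∈ X'. Let V be the set of unit vectors v ∈ W such that ⟨v, b⟩ ∈ {α, −α} for every b ∈ X' and ⟨v, b₀⟩ = α, and let G be the simple graph on vertex set V in which distinct v, v' ∈ V are adjacent if and only if |⟨v, v'⟩| = α. Then for every finite equiangular set Y of unit vectors in W with angle α such that each line spanned by a vector of X' is among the lines spanned by vectors of Y, the number of distinct lines spanned by vectors of Y is at most |X'| + ω(G), where ω(G) is the clique number of G. -/

import Mathlib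

lemma aux_span_neg_singleton {d : ℕ} (y : EuclideanSpace ℝ (Fin d)) :
    Submodule.span ℝ ({-y} : Set (EuclideanSpace ℝ (Fin d))) = Submodule.span ℝ {y} := by
  rw [← Set.neg_singleton, Submodule.span_neg]

lemma aux_sign {d : ℕ} {y b : EuclideanSpace ℝ (Fin d)} (hy : ‖y‖ = 1) (hb : ‖b‖ = 1)
    (h : Submodule.span ℝ ({y} : Set (EuclideanSpace ℝ (Fin d))) = Submodule.span ℝ {b}) :
    y = b ∨ y = -b := by
  have hmem : y ∈ Submodule.span ℝ ({b} : Set (EuclideanSpace ℝ (Fin d))) :=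
    h ▸ Submodule.mem_span_singleton_self y
  obtain ⟨c, rfl⟩ := Submodule.mem_span_singleton.mp hmem
  have hc : |c| = 1 := by
    have := norm_smul c b
    rw [hb, mul_one, hy, Real.norm_eq_abs] at this
    exact this.symm
  rcases (abs_eq zero_le_one).mp hc with h1 | h1 <;> subst h1 <;> simp



/-- The simple graph on a set `V` of vectors in which two distinct vectors are
adjacent exactly when the absolute value of their inner product is `α`. -/
def equiangularGraph {d : ℕ} (α : ℝ) (V : Set (EuclideanSpace ℝ (Fin d))) :
    SimpleGraph V where
  Adj v w := v ≠ w ∧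
    |(inner ℝ (v : EuclideanSpace ℝ (Fin d)) (w : EuclideanSpace ℝ (Fin d)) : ℝ)| = α
  symm := ⟨fun v w ⟨hne, h⟩ => ⟨hne.symm, by rwa [real_inner_comm]⟩⟩
  loopless := ⟨fun v h => h.1 rfl⟩

/-- Let `X'` be a finite linearly independent equiangular set of unit vectors in
`ℝ^d` with angle `arccos α` (`0 < α < 1`), let `W` be its span and `b₀ ∈ X'`.
Let `V` be the set of unit vectors `v ∈ W` with `⟪v, b⟫ = ±α` for all `b ∈ X'`
and `⟪v, b₀⟫ = α`, and let `G` be the graph on `V` joining vectors whose inner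
product has absolute value `α`.  Then any finite equiangular set `Y` of unit
vectors in `W` with angle `arccos α`, whose set of spanned lines contains every
line spanned by a vector of `X'`, spans at most `|X'| + ω(G)` distinct lines. -/
theorem equiangular_lines_card_le_card_add_cliqueNum {d : ℕ} (α : ℝ)
    (hα0 : 0 < α) (hα1 : α < 1)
    (X' : Finset (EuclideanSpace ℝ (Fin d)))
    (hind : LinearIndependent ℝ
      (fun x : (X' : Set (EuclideanSpace ℝ (Fin d))) => (x : EuclideanSpace ℝ (Fin d))))
    (hunit : ∀ v ∈ X', ‖v‖ = 1)
    (hequi : ∀ v ∈ X', ∀ w ∈ X', v ≠ w → |(inner ℝ v w : ℝ)| = α)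
    (b₀ : EuclideanSpace ℝ (Fin d)) (hb₀ : b₀ ∈ X')
    (W : Submodule ℝ (EuclideanSpace ℝ (Fin d)))
    (hW : W = Submodule.span ℝ (X' : Set (EuclideanSpace ℝ (Fin d))))
    (V : Set (EuclideanSpace ℝ (Fin d)))
    (hV : V = {v | v ∈ W ∧ ‖v‖ = 1 ∧
      (∀ b ∈ X', (inner ℝ v b : ℝ) = α ∨ (inner ℝ v b : ℝ) = -α) ∧
      (inner ℝ v b₀ : ℝ) = α})
    (Y : Finset (EuclideanSpace ℝ (Fin d)))
    (hYW : ∀ y ∈ Y, y ∈ W)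
    (hYunit : ∀ y ∈ Y, ‖y‖ = 1)
    (hYequi : ∀ y ∈ Y, ∀ y' ∈ Y, y ≠ y' → |(inner ℝ y y' : ℝ)| = α)
    (hX'Y : ∀ b ∈ X', ∃ y ∈ Y,
      Submodule.span ℝ ({y} : Set (EuclideanSpace ℝ (Fin d))) =
        Submodule.span ℝ ({b} : Set (EuclideanSpace ℝ (Fin d)))) :
    ((fun y => Submodule.span ℝ ({y} : Set (EuclideanSpace ℝ (Fin d)))) ''
        (Y : Set (EuclideanSpace ℝ (Fin d)))).ncard ≤
      X'.card + (equiangularGraph α V).cliqueNum := by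
  classical
  set f : EuclideanSpace ℝ (Fin d) → Submodule ℝ (EuclideanSpace ℝ (Fin d)) :=
    fun y => Submodule.span ℝ ({y} : Set (EuclideanSpace ℝ (Fin d))) with hf
  -- V is finite
  have hVfin : V.Finite := by
    have hinj : Set.InjOn
        (fun v => fun b : X' => ((inner ℝ v (b : EuclideanSpace ℝ (Fin d)) : ℝ) = α)) V := by
      intro v hv v' hv' hEq
      rw [hV] at hv hv'
      obtain ⟨hvW, -, hvb, -⟩ := hv
      obtain ⟨hv'W, -, hv'b, -⟩ := hv'
      have hinner : ∀ b ∈ X', (inner ℝ v b : ℝ) = (inner ℝ v' b : ℝ) := by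
        intro b hb
        have h1 := hvb b hb
        have h2 := hv'b b hb
        have hiff := congrFun hEq ⟨b, hb⟩
        simp only [eq_iff_iff] at hiff
        rcases h1 with h1 | h1 <;> rcases h2 with h2 | h2 <;> rw [h1, h2]
        · rw [h1, h2] at hiff
          have := hiff.mp rfl
          linarith
        · rw [h1, h2] at hiff
          have := hiff.mpr rfl
          linarith
      have hperp : W ≤ (Submodule.span ℝ ({v - v'} : Set (EuclideanSpace ℝ (Fin d))))ᗮ := by
        rw [hW]
        apply Submodule.span_le.mpr
        intro b hb
        rw [SetLike.mem_coe, Submodule.mem_orthogonal_singleton_iff_inner_right]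
        rw [inner_sub_left, hinner b hb, sub_self]
      have hzero : (inner ℝ (v - v') (v - v') : ℝ) = 0 :=
        Submodule.inner_right_of_mem_orthogonal (Submodule.mem_span_singleton_self _)
          (hperp (Submodule.sub_mem W hvW hv'W))
      have := inner_self_eq_zero.mp hzero
      exact sub_eq_zero.mp this
    exact Set.Finite.of_finite_image (Set.toFinite _) hinj
  haveI : Fintype V := hVfin.fintype
  -- rewrite the goal as a Finset card
  rw [← Finset.coe_image, Set.ncard_coe_finset]
  set p : Submodule ℝ (EuclideanSpace ℝ (Fin d)) → Prop := fun ℓ => ∃ b ∈ X', f b = ℓ with hp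
  have hsplit := Finset.card_filter_add_card_filter_not (s := Y.image f) (p := p)
  -- bound on the lines coming from X'
  have h1 : ((Y.image f).filter p).card ≤ X'.card := by
    refine le_trans (Finset.card_le_card ?_) (Finset.card_image_le (f := f) (s := X'))
    intro ℓ hℓ
    rw [Finset.mem_filter] at hℓ
    obtain ⟨-, b, hb, hfb⟩ := hℓ
    exact Finset.mem_image.mpr ⟨b, hb, hfb⟩
  -- key: angles with elements of X'
  have keyA : ∀ y ∈ Y, ¬ p (f y) → ∀ b ∈ X', |(inner ℝ y b : ℝ)| = α := by
    intro y hy hnp b hb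
    obtain ⟨yb, hybY, hspan⟩ := hX'Y b hb
    have hsign := aux_sign (hYunit yb hybY) (hunit b hb) hspan
    have hne : y ≠ yb := by
      rintro rfl
      exact hnp ⟨b, hb, hspan.symm⟩
    have habs := hYequi y hy yb hybY hne
    rcases hsign with rfl | h
    · exact habs
    · rw [h, inner_neg_right, abs_neg] at habs
      exact habs
  set g : EuclideanSpace ℝ (Fin d) → EuclideanSpace ℝ (Fin d) :=
    fun y => if (inner ℝ y b₀ : ℝ) < 0 then -y else y with hg
  have hgf : ∀ y, f (g y) = f y := by
    intro y
    simp only [hg, hf]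
    split_ifs
    · exact aux_span_neg_singleton y
    · rfl
  have keyB : ∀ y ∈ Y, ¬ p (f y) → g y ∈ V := by
    intro y hy hnp
    have hb0abs : |(inner ℝ y b₀ : ℝ)| = α := keyA y hy hnp b₀ hb₀
    rw [hV]
    refine ⟨?_, ?_, ?_, ?_⟩
    · simp only [hg]
      split_ifs
      · exact Submodule.neg_mem W (hYW y hy)
      · exact hYW y hy
    · simp only [hg]
      split_ifs
      · rw [norm_neg]; exact hYunit y hy
      · exact hYunit y hy
    · intro b hb
      have habs : |(inner ℝ (g y) b : ℝ)| = α := by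
        have h := keyA y hy hnp b hb
        simp only [hg]
        split_ifs
        · rwa [inner_neg_left, abs_neg]
        · exact h
      exact (abs_eq hα0.le).mp habs
    · simp only [hg]
      split_ifs with hc
      · rw [inner_neg_left, ← abs_of_neg hc]
        exact hb0abs
      · push_neg at hc
        rw [← abs_of_nonneg hc]
        exact hb0abs
  set T : Finset (EuclideanSpace ℝ (Fin d)) :=
    (Y.filter (fun y => ¬ p (f y))).image g with hT
  have hTV : ∀ t ∈ T, t ∈ V := by
    intro t ht
    rw [hT, Finset.mem_image] at ht
    obtain ⟨y, hy, rfl⟩ := ht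
    rw [Finset.mem_filter] at hy
    exact keyB y hy.1 hy.2
  -- the non-X' lines are covered by T
  have h2 : ((Y.image f).filter (fun ℓ => ¬ p ℓ)).card ≤ T.card := by
    refine le_trans (Finset.card_le_card ?_) (Finset.card_image_le (f := f) (s := T))
    intro ℓ hℓ
    rw [Finset.mem_filter] at hℓ
    obtain ⟨hmem, hnp⟩ := hℓ
    obtain ⟨y, hy, rfl⟩ := Finset.mem_image.mp hmem
    refine Finset.mem_image.mpr ⟨g y, ?_, hgf y⟩
    rw [hT]
    exact Finset.mem_image_of_mem g (Finset.mem_filter.mpr ⟨hy, hnp⟩)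
  -- T gives a clique
  set S : Finset V := T.attach.map
    ⟨fun t => (⟨t.1, hTV t.1 t.2⟩ : V),
      fun a b h => Subtype.ext (Subtype.mk_eq_mk.mp h)⟩ with hS
  have hScard : S.card = T.card := by
    rw [hS, Finset.card_map, Finset.card_attach]
  have hclique : (equiangularGraph α V).IsClique ↑S := by
    intro u hu w hw hne
    have huT : (u : EuclideanSpace ℝ (Fin d)) ∈ T := by
      rw [Finset.mem_coe, hS, Finset.mem_map] at hu
      obtain ⟨t, -, rfl⟩ := hu
      exact t.2
    have hwT : (w : EuclideanSpace ℝ (Fin d)) ∈ T := by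
      rw [Finset.mem_coe, hS, Finset.mem_map] at hw
      obtain ⟨t, -, rfl⟩ := hw
      exact t.2
    rw [hT, Finset.mem_image] at huT hwT
    obtain ⟨y, hy, hgy⟩ := huT
    obtain ⟨y', hy', hgy'⟩ := hwT
    rw [Finset.mem_filter] at hy hy'
    refine ⟨hne, ?_⟩
    have hyne : y ≠ y' := by
      rintro rfl
      exact hne (Subtype.ext (hgy ▸ hgy' ▸ rfl))
    have habs := hYequi y hy.1 y' hy'.1 hyne
    rw [← hgy, ← hgy']
    simp only [hg]
    split_ifs
    · rw [inner_neg_left, inner_neg_right, neg_neg]; exact habs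
    · rw [inner_neg_left, abs_neg]; exact habs
    · rw [inner_neg_right, abs_neg]; exact habs
    · exact habs
  have h3 : S.card ≤ (equiangularGraph α V).cliqueNum :=
    SimpleGraph.IsClique.card_le_cliqueNum (G := equiangularGraph α V) (t := S) (tc := hclique)
  omega
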